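/- Let S be a sharp finitely generated commutative monoid written multiplicatively, and let R(S) denote the set of maps r : (S × S) ∖ {(1,1)} → [0, ∞] satisfying: (i) r(f,g) = r(g,f)^{-1}; (ii) r(f,g)·r(g,h) = r(f,h) whenever {r(f,g), r(g,h)} ≠ {0, ∞}; (iii) r(fg, h) = r(f,h) + r(g,h). Then for S = ℕ² with standard generators q₁, q₂, the map R(ℕ²) → [0, ∞] sending r to r(q₁, q₂) is a bijection. -/

import Mathlib

open ENNReal

/-- The space of ratios `R(S)` of Kato–Nakayama–Usui: maps
`(S × S) ∖ {(1,1)} → [0,∞]` satisfying `r(f,g) = r(g,f)⁻¹`,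
`r(f,g)·r(g,h) = r(f,h)` whenever `{r(f,g), r(g,h)} ≠ {0,∞}`, and
`r(fg,h) = r(f,h) + r(g,h)`. -/
structure RatioSpace (S : Type*) [CommMonoid S] where
  toFun : {p : S × S // p ≠ 1} → ℝ≥0∞
  inv_symm : ∀ (f g : S) (h : ((f, g) : S × S) ≠ 1) (h' : ((g, f) : S × S) ≠ 1),
    toFun ⟨(f, g), h⟩ = (toFun ⟨(g, f), h'⟩)⁻¹
  mul_trans : ∀ (f g h : S) (h1 : ((f, g) : S × S) ≠ 1) (h2 : ((g, h) : S × S) ≠ 1)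
    (h3 : ((f, h) : S × S) ≠ 1),
    ({toFun ⟨(f, g), h1⟩, toFun ⟨(g, h), h2⟩} : Set ℝ≥0∞) ≠ {0, ⊤} →
    toFun ⟨(f, g), h1⟩ * toFun ⟨(g, h), h2⟩ = toFun ⟨(f, h), h3⟩
  add_law : ∀ (f g h : S) (h1 : ((f * g, h) : S × S) ≠ 1) (h2 : ((f, h) : S × S) ≠ 1)
    (h3 : ((g, h) : S × S) ≠ 1),
    toFun ⟨(f * g, h), h1⟩ = toFun ⟨(f, h), h2⟩ + toFun ⟨(g, h), h3⟩

namespace KNUProof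

noncomputable def lam1 (t : ℝ≥0∞) (v : ℕ × ℕ) : ℝ≥0∞ :=
  if t = ⊤ then (v.1 : ℝ≥0∞) else (v.1 : ℝ≥0∞) * t + v.2

noncomputable def lam2 (t : ℝ≥0∞) (v : ℕ × ℕ) : ℝ≥0∞ :=
  if t = ⊤ then (v.2 : ℝ≥0∞) else (v.1 : ℝ≥0∞)

lemma lam1_add (t : ℝ≥0∞) (v w : ℕ × ℕ) : lam1 t (v + w) = lam1 t v + lam1 t w := by
  unfold lam1; split <;> simp [Prod.fst_add, Prod.snd_add] <;> push_cast <;> ring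

lemma lam2_add (t : ℝ≥0∞) (v w : ℕ × ℕ) : lam2 t (v + w) = lam2 t v + lam2 t w := by
  unfold lam2; split <;> simp [Prod.fst_add, Prod.snd_add] <;> push_cast <;> ring

lemma lam1_ne_top (t : ℝ≥0∞) (v : ℕ × ℕ) : lam1 t v ≠ ⊤ := by
  unfold lam1; split
  · exact natCast_ne_top _
  · next h => exact ENNReal.add_ne_top.2 ⟨ENNReal.mul_ne_top (natCast_ne_top _) h, natCast_ne_top _⟩

lemma lam2_ne_top (t : ℝ≥0∞) (v : ℕ × ℕ) : lam2 t v ≠ ⊤ := by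
  unfold lam2; split <;> exact natCast_ne_top _

lemma lam1_zero (t : ℝ≥0∞) : lam1 t 0 = 0 := by unfold lam1; split <;> simp
lemma lam2_zero (t : ℝ≥0∞) : lam2 t 0 = 0 := by unfold lam2; split <;> simp

lemma lam_pos (t : ℝ≥0∞) (v : ℕ × ℕ) (hv : v ≠ 0) (h1 : lam1 t v = 0) : lam2 t v ≠ 0 := by
  unfold lam1 at h1; unfold lam2; split at h1 <;> rename_i ht <;> simp only [ht, if_true, if_false, if_pos, if_neg, ne_eq]
  · simp only [Nat.cast_eq_zero] at h1 ⊢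
    intro h2; exact hv (Prod.ext h1 h2)
  · rw [add_eq_zero] at h1
    simp only [Nat.cast_eq_zero, mul_eq_zero] at h1 ⊢
    intro h2
    exact hv (Prod.ext h2 h1.2)

noncomputable def Vr (t : ℝ≥0∞) (f g : ℕ × ℕ) : ℝ≥0∞ :=
  if lam1 t f = 0 ∧ lam1 t g = 0 then lam2 t f / lam2 t g else lam1 t f / lam1 t g

lemma Vr_of_ne (t : ℝ≥0∞) {f g : ℕ × ℕ} (h : lam1 t f ≠ 0 ∨ lam1 t g ≠ 0) :
    Vr t f g = lam1 t f / lam1 t g := by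
  unfold Vr; rw [if_neg]; tauto

lemma Vr_of_zero (t : ℝ≥0∞) {f g : ℕ × ℕ} (h1 : lam1 t f = 0) (h2 : lam1 t g = 0) :
    Vr t f g = lam2 t f / lam2 t g := by
  unfold Vr; rw [if_pos ⟨h1, h2⟩]

lemma ediv_mul_div_cancelX {A B C : ℝ≥0∞} (hB0 : B ≠ 0) (hBt : B ≠ ⊤) :
    A / B * (B / C) = A / C := by
  rw [div_eq_mul_inv, div_eq_mul_inv, div_eq_mul_inv, mul_assoc, ← mul_assoc B⁻¹,
    ENNReal.inv_mul_cancel hB0 hBt, one_mul]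

lemma pair_ne {x y : ℝ≥0∞} (h : ¬((x = 0 ∧ y = ⊤) ∨ (x = ⊤ ∧ y = 0))) :
    ({x, y} : Set ℝ≥0∞) ≠ {0, ⊤} := by
  intro he
  have hx : x = 0 ∨ x = ⊤ := by
    have : x ∈ ({0, ⊤} : Set ℝ≥0∞) := he ▸ Set.mem_insert x {y}
    simpa using this
  have hy : y = 0 ∨ y = ⊤ := by
    have : y ∈ ({0, ⊤} : Set ℝ≥0∞) := he ▸ Set.mem_insert_of_mem x rfl
    simpa using this
  have h0 : (0:ℝ≥0∞) = x ∨ (0:ℝ≥0∞) = y := by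
    have : (0:ℝ≥0∞) ∈ ({x, y} : Set ℝ≥0∞) := he ▸ Set.mem_insert 0 {⊤}
    simpa using this
  have ht : (⊤:ℝ≥0∞) = x ∨ (⊤:ℝ≥0∞) = y := by
    have : (⊤:ℝ≥0∞) ∈ ({x, y} : Set ℝ≥0∞) := he ▸ Set.mem_insert_of_mem 0 rfl
    simpa using this
  rcases hx with hx | hx <;> rcases hy with hy | hy
  · rcases ht with ht | ht <;> simp_all
  · exact h (Or.inl ⟨hx, hy⟩)
  · exact h (Or.inr ⟨hx, hy⟩)
  · rcases h0 with h0 | h0 <;> simp_all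

lemma pair_eq_01 {x y : ℝ≥0∞} (hx : x = 0) (hy : y = ⊤) : ({x, y} : Set ℝ≥0∞) = {0, ⊤} := by
  rw [hx, hy]

lemma pair_eq_10 {x y : ℝ≥0∞} (hx : x = ⊤) (hy : y = 0) : ({x, y} : Set ℝ≥0∞) = {0, ⊤} := by
  rw [hx, hy, Set.pair_comm]

lemma Vr_inv (t : ℝ≥0∞) {f g : ℕ × ℕ} (h : ¬(f = 0 ∧ g = 0)) :
    Vr t f g = (Vr t g f)⁻¹ := by
  by_cases hfg : lam1 t f = 0 ∧ lam1 t g = 0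
  · rw [Vr_of_zero t hfg.1 hfg.2, Vr_of_zero t hfg.2 hfg.1]
    rw [ENNReal.inv_div (Or.inl (lam2_ne_top t f)) ?_]
    rcases (not_and_or.1 h) with hf | hg
    · exact Or.inl (lam_pos t f hf hfg.1)
    · exact Or.inr (lam_pos t g hg hfg.2)
  · rw [not_and_or] at hfg
    rw [Vr_of_ne t hfg, Vr_of_ne t hfg.symm]
    rw [ENNReal.inv_div (Or.inl (lam1_ne_top t f)) hfg]

lemma Vr_add (t : ℝ≥0∞) {f g h : ℕ × ℕ} (h2 : ¬(f = 0 ∧ h = 0)) (h3 : ¬(g = 0 ∧ h = 0)) :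
    Vr t (f + g) h = Vr t f h + Vr t g h := by
  by_cases hC : lam1 t h = 0
  · by_cases hA : lam1 t f = 0 <;> by_cases hB : lam1 t g = 0
    · have hAB : lam1 t (f + g) = 0 := by rw [lam1_add, hA, hB, add_zero]
      rw [Vr_of_zero t hAB hC, Vr_of_zero t hA hC, Vr_of_zero t hB hC,
        ENNReal.div_add_div_same, lam2_add]
    · have hAB : lam1 t (f + g) ≠ 0 := by
        rw [lam1_add, hA, zero_add]; exact hB
      rw [Vr_of_ne t (Or.inl hAB), Vr_of_zero t hA hC, Vr_of_ne t (Or.inl hB), hC,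
        ENNReal.div_zero hAB, ENNReal.div_zero hB, add_top]
    · have hAB : lam1 t (f + g) ≠ 0 := by
        rw [lam1_add, hB, add_zero]; exact hA
      rw [Vr_of_ne t (Or.inl hAB), Vr_of_ne t (Or.inl hA), Vr_of_zero t hB hC, hC,
        ENNReal.div_zero hAB, ENNReal.div_zero hA, top_add]
    · have hAB : lam1 t (f + g) ≠ 0 := by
        rw [lam1_add]; intro hz; exact hA (add_eq_zero.1 hz).1
      rw [Vr_of_ne t (Or.inl hAB), Vr_of_ne t (Or.inl hA), Vr_of_ne t (Or.inl hB), hC,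
        ENNReal.div_zero hAB, ENNReal.div_zero hA, top_add]
  · rw [Vr_of_ne t (Or.inr hC), Vr_of_ne t (Or.inr hC), Vr_of_ne t (Or.inr hC),
      lam1_add, ENNReal.div_add_div_same]

lemma Vr_mul (t : ℝ≥0∞) {f g h : ℕ × ℕ} (h1 : ¬(f = 0 ∧ g = 0)) (h2 : ¬(g = 0 ∧ h = 0))
    (h3 : ¬(f = 0 ∧ h = 0)) (hset : ({Vr t f g, Vr t g h} : Set ℝ≥0∞) ≠ {0, ⊤}) :
    Vr t f g * Vr t g h = Vr t f h := by
  by_cases hA : lam1 t f = 0 <;> by_cases hB : lam1 t g = 0 <;> by_cases hC : lam1 t h = 0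
  · -- A = B = C = 0, all secondary
    by_cases hg : g = 0
    · -- V f g = ⊤, V g h = 0
      have hf : f ≠ 0 := fun hf => h1 ⟨hf, hg⟩
      have hh : h ≠ 0 := fun hh => h2 ⟨hg, hh⟩
      exact absurd (pair_eq_10
        (by rw [Vr_of_zero t hA hB, hg, lam2_zero, ENNReal.div_zero (lam_pos t f hf hA)])
        (by rw [Vr_of_zero t hB hC, hg, lam2_zero, ENNReal.zero_div])) hset
    · rw [Vr_of_zero t hA hB, Vr_of_zero t hB hC, Vr_of_zero t hA hC]
      exact ediv_mul_div_cancelX (lam_pos t g hg hB) (lam2_ne_top t g)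
  · -- A = B = 0, C ≠ 0 : (A2/B2) * 0 = 0
    rw [Vr_of_zero t hA hB, Vr_of_ne t (Or.inr hC), Vr_of_ne t (Or.inr hC), hA, hB,
      ENNReal.zero_div, mul_zero]
  · -- A = 0, B ≠ 0, C = 0 : 0 and ⊤, excluded
    exact absurd (pair_eq_01
      (by rw [Vr_of_ne t (Or.inr hB), hA, ENNReal.zero_div])
      (by rw [Vr_of_ne t (Or.inl hB), hC, ENNReal.div_zero hB])) hset
  · -- A = 0, B ≠ 0, C ≠ 0 : 0 * (B/C) = 0
    rw [Vr_of_ne t (Or.inr hB), Vr_of_ne t (Or.inr hC), Vr_of_ne t (Or.inr hC), hA,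
      ENNReal.zero_div, ENNReal.zero_div, zero_mul]
  · -- A ≠ 0, B = 0, C = 0 : ⊤ * (B2/C2) = ⊤ = A/0
    by_cases hh : h = 0
    · have hg : g ≠ 0 := fun hg => h2 ⟨hg, hh⟩
      rw [Vr_of_ne t (Or.inl hA), Vr_of_zero t hB hC, Vr_of_ne t (Or.inl hA), hB, hC,
        ENNReal.div_zero hA, hh, lam2_zero, ENNReal.div_zero (lam_pos t g hg hB),
        top_mul_top]
    · by_cases hg : g = 0
      · exact absurd (pair_eq_10
          (by rw [Vr_of_ne t (Or.inl hA), hB, ENNReal.div_zero hA])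
          (by rw [Vr_of_zero t hB hC, hg, lam2_zero, ENNReal.zero_div])) hset
      · rw [Vr_of_ne t (Or.inl hA), Vr_of_zero t hB hC, Vr_of_ne t (Or.inl hA), hB, hC,
          ENNReal.div_zero hA]
        exact ENNReal.top_mul (by simp [ENNReal.div_eq_zero_iff, lam_pos t g hg hB, lam2_ne_top])
  · -- A ≠ 0, B = 0, C ≠ 0 : ⊤ and 0, excluded
    exact absurd (pair_eq_10
      (by rw [Vr_of_ne t (Or.inl hA), hB, ENNReal.div_zero hA])
      (by rw [Vr_of_ne t (Or.inr hC), hB, ENNReal.zero_div])) hset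
  · -- A ≠ 0, B ≠ 0, C = 0 : (A/B) * ⊤ = ⊤ = A/0
    rw [Vr_of_ne t (Or.inl hA), Vr_of_ne t (Or.inl hB), Vr_of_ne t (Or.inl hA), hC,
      ENNReal.div_zero hB, ENNReal.div_zero hA]
    exact ENNReal.mul_top (by simp [ENNReal.div_eq_zero_iff, hA, lam1_ne_top])
  · -- all ≠ 0
    rw [Vr_of_ne t (Or.inl hA), Vr_of_ne t (Or.inl hB), Vr_of_ne t (Or.inl hA)]
    exact ediv_mul_div_cancelX hB (lam1_ne_top t g)

abbrev SN := Multiplicative (ℕ × ℕ)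

lemma pair_ne_one_of_left {f g : SN} (hf : f ≠ 1) : ((f, g) : SN × SN) ≠ 1 :=
  fun he => hf (congrArg Prod.fst he)

lemma pair_ne_one_of_right {f g : SN} (hg : g ≠ 1) : ((f, g) : SN × SN) ≠ 1 :=
  fun he => hg (congrArg Prod.snd he)

lemma not_both_zero {f g : SN} (h : ((f, g) : SN × SN) ≠ 1) : ¬(f.toAdd = 0 ∧ g.toAdd = 0) := by
  rintro ⟨h1, h2⟩
  exact h (Prod.ext (toAdd_eq_zero.1 h1) (toAdd_eq_zero.1 h2))

noncomputable def mkRatio (t : ℝ≥0∞) : RatioSpace SN where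
  toFun p := Vr t p.1.1.toAdd p.1.2.toAdd
  inv_symm f g h h' := Vr_inv t (not_both_zero h)
  mul_trans f g h h1 h2 h3 hset :=
    Vr_mul t (not_both_zero h1) (not_both_zero h2) (not_both_zero h3) hset
  add_law f g h h1 h2 h3 := by
    have : (f * g).toAdd = f.toAdd + g.toAdd := toAdd_mul f g
    simp only [this]
    exact Vr_add t (not_both_zero h2) (not_both_zero h3)

lemma mkRatio_val (t : ℝ≥0∞) (hp : ((Multiplicative.ofAdd ((1, 0) : ℕ × ℕ),
    Multiplicative.ofAdd ((0, 1) : ℕ × ℕ)) : SN × SN) ≠ 1) :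
    (mkRatio t).toFun ⟨(Multiplicative.ofAdd ((1, 0) : ℕ × ℕ),
      Multiplicative.ofAdd ((0, 1) : ℕ × ℕ)), hp⟩ = t := by
  show Vr t (1, 0) (0, 1) = t
  by_cases ht : t = ⊤
  · have h1 : lam1 t (1, 0) = 1 := by simp [lam1, ht]
    rw [Vr_of_ne t (Or.inl (by rw [h1]; exact one_ne_zero)), h1]
    have h2 : lam1 t (0, 1) = 0 := by simp [lam1, ht]
    rw [h2, ENNReal.div_zero one_ne_zero, ht]
  · have h1 : lam1 t (1, 0) = t := by simp [lam1, ht]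
    have h2 : lam1 t (0, 1) = 1 := by simp [lam1, ht]
    rw [Vr_of_ne t (Or.inr (by rw [h2]; exact one_ne_zero)), h1, h2, div_one]

lemma toFun_congr {S : Type*} [CommMonoid S] (r : RatioSpace S) {p q : S × S}
    (hp : p ≠ 1) (hq : q ≠ 1) (h : p = q) : r.toFun ⟨p, hp⟩ = r.toFun ⟨q, hq⟩ := by
  subst h; rfl

lemma r_self (r : RatioSpace SN) (f : SN) (hf : f ≠ 1) :
    r.toFun ⟨(f, f), pair_ne_one_of_left hf⟩ = 1 := by
  set x := r.toFun ⟨(f, f), pair_ne_one_of_left hf⟩ with hx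
  have hinv : x = x⁻¹ := r.inv_symm f f _ _
  have h0 : x ≠ 0 := by
    intro h
    rw [h, ENNReal.inv_zero] at hinv
    exact zero_ne_top hinv
  have ht : x ≠ ⊤ := by
    intro h
    rw [h, ENNReal.inv_top] at hinv
    exact top_ne_zero hinv
  have hsq : x * x = x := by
    refine r.mul_trans f f f _ _ _ (pair_ne ?_)
    rintro (⟨ha, hb⟩ | ⟨ha, hb⟩)
    · exact ht (hx ▸ hb)
    · exact h0 (hx ▸ hb)
  have := congrArg (· * x⁻¹) hsq
  simp only [mul_assoc] at this
  rwa [ENNReal.mul_inv_cancel h0 ht, mul_one] at this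

lemma r_one_left (r : RatioSpace SN) (g : SN) (hg : g ≠ 1) :
    r.toFun ⟨(1, g), pair_ne_one_of_right hg⟩ = 0 := by
  set x := r.toFun ⟨(1, g), pair_ne_one_of_right hg⟩ with hx
  have hxx : x = x + x := by
    have ha := r.add_law 1 1 g (pair_ne_one_of_right hg) (pair_ne_one_of_right hg)
      (pair_ne_one_of_right hg)
    rwa [toFun_congr r _ (pair_ne_one_of_right hg) (by rw [one_mul])] at ha
  have ht : x ≠ ⊤ := by
    intro h
    have ha := r.add_law 1 g g (pair_ne_one_of_right hg) (pair_ne_one_of_right hg)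
      (pair_ne_one_of_right hg)
    rw [toFun_congr r _ (pair_ne_one_of_left hg) (by rw [one_mul]), r_self r g hg, ← hx, h,
      top_add] at ha
    exact one_ne_top ha
  have : x + 0 = x + x := by rw [add_zero]; exact hxx
  exact ((ENNReal.add_right_inj ht).1 this).symm

lemma r_one_right (r : RatioSpace SN) (g : SN) (hg : g ≠ 1) :
    r.toFun ⟨(g, 1), pair_ne_one_of_left hg⟩ = ⊤ := by
  rw [r.inv_symm g 1 _ (pair_ne_one_of_right hg), r_one_left r g hg, ENNReal.inv_zero]

lemma r_pow (r : RatioSpace SN) (f h : SN) (hh : h ≠ 1) (n : ℕ) :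
    r.toFun ⟨(f ^ n, h), pair_ne_one_of_right hh⟩
      = n * r.toFun ⟨(f, h), pair_ne_one_of_right hh⟩ := by
  induction n with
  | zero =>
    rw [toFun_congr r _ (pair_ne_one_of_right hh) (by rw [pow_zero]), r_one_left r h hh,
      Nat.cast_zero, zero_mul]
  | succ n ih =>
    have ha := r.add_law (f ^ n) f h (pair_ne_one_of_right hh) (pair_ne_one_of_right hh)
      (pair_ne_one_of_right hh)
    rw [toFun_congr r (pair_ne_one_of_right hh) (pair_ne_one_of_right hh) (by rw [pow_succ])]
    rw [ha, ih, Nat.cast_succ, add_mul, one_mul]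

lemma r_ab (r : RatioSpace SN) (a b : ℕ) (v : SN) (hv : v ≠ 1) :
    r.toFun ⟨(Multiplicative.ofAdd ((a, b) : ℕ × ℕ), v), pair_ne_one_of_right hv⟩
      = a * r.toFun ⟨(Multiplicative.ofAdd ((1, 0) : ℕ × ℕ), v), pair_ne_one_of_right hv⟩
        + b * r.toFun ⟨(Multiplicative.ofAdd ((0, 1) : ℕ × ℕ), v), pair_ne_one_of_right hv⟩ := by
  have key : Multiplicative.ofAdd ((a, b) : ℕ × ℕ)
      = (Multiplicative.ofAdd ((1, 0) : ℕ × ℕ)) ^ a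
        * (Multiplicative.ofAdd ((0, 1) : ℕ × ℕ)) ^ b := by
    rw [← ofAdd_nsmul, ← ofAdd_nsmul, ← ofAdd_add]
    congr 1
    simp [Prod.ext_iff]
  rw [toFun_congr r (pair_ne_one_of_right hv) (pair_ne_one_of_right hv) (by rw [key]),
    r.add_law _ _ v (pair_ne_one_of_right hv) (pair_ne_one_of_right hv) (pair_ne_one_of_right hv),
    r_pow r _ v hv, r_pow r _ v hv]

lemma Vr_zero_left (t : ℝ≥0∞) (w : ℕ × ℕ) : Vr t 0 w = 0 := by
  by_cases h : lam1 t w = 0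
  · rw [Vr_of_zero t (lam1_zero t) h, lam2_zero, ENNReal.zero_div]
  · rw [Vr_of_ne t (Or.inr h), lam1_zero, ENNReal.zero_div]

lemma Vr_zero_right (t : ℝ≥0∞) (w : ℕ × ℕ) (hw : w ≠ 0) : Vr t w 0 = ⊤ := by
  by_cases h : lam1 t w = 0
  · rw [Vr_of_zero t h (lam1_zero t), lam2_zero, ENNReal.div_zero (lam_pos t w hw h)]
  · rw [Vr_of_ne t (Or.inl h), lam1_zero, ENNReal.div_zero h]

lemma q1_ne_one : (Multiplicative.ofAdd ((1, 0) : ℕ × ℕ)) ≠ 1 := by decide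
lemma q2_ne_one : (Multiplicative.ofAdd ((0, 1) : ℕ × ℕ)) ≠ 1 := by decide

lemma master (r : RatioSpace SN) (a b c d : ℕ)
    (hp : ((Multiplicative.ofAdd ((a, b) : ℕ × ℕ),
            Multiplicative.ofAdd ((c, d) : ℕ × ℕ)) : SN × SN) ≠ 1)
    (hq : ((Multiplicative.ofAdd ((1, 0) : ℕ × ℕ),
            Multiplicative.ofAdd ((0, 1) : ℕ × ℕ)) : SN × SN) ≠ 1) :
    r.toFun ⟨(Multiplicative.ofAdd ((a, b) : ℕ × ℕ), Multiplicative.ofAdd ((c, d) : ℕ × ℕ)), hp⟩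
      = Vr (r.toFun ⟨(Multiplicative.ofAdd ((1, 0) : ℕ × ℕ),
          Multiplicative.ofAdd ((0, 1) : ℕ × ℕ)), hq⟩) (a, b) (c, d) := by
  set t := r.toFun ⟨(Multiplicative.ofAdd ((1, 0) : ℕ × ℕ),
      Multiplicative.ofAdd ((0, 1) : ℕ × ℕ)), hq⟩ with hT
  by_cases hf : (a, b) = ((0, 0) : ℕ × ℕ)
  · -- f = 1
    have hg : Multiplicative.ofAdd ((c, d) : ℕ × ℕ) ≠ 1 := by
      intro h
      exact hp (by rw [h, hf]; rfl)
    have hePair : ((Multiplicative.ofAdd ((a, b) : ℕ × ℕ),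
        Multiplicative.ofAdd ((c, d) : ℕ × ℕ)) : SN × SN)
        = (1, Multiplicative.ofAdd ((c, d) : ℕ × ℕ)) := by rw [hf]; rfl
    rw [toFun_congr r hp (pair_ne_one_of_right hg) hePair, r_one_left r _ hg, hf,
      Prod.mk_zero_zero, Vr_zero_left]
  by_cases hg : (c, d) = ((0, 0) : ℕ × ℕ)
  · -- g = 1
    have hf' : Multiplicative.ofAdd ((a, b) : ℕ × ℕ) ≠ 1 := fun h => hf (by simpa using h)
    have hePair : ((Multiplicative.ofAdd ((a, b) : ℕ × ℕ),
        Multiplicative.ofAdd ((c, d) : ℕ × ℕ)) : SN × SN)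
        = (Multiplicative.ofAdd ((a, b) : ℕ × ℕ), 1) := by rw [hg]; rfl
    rw [toFun_congr r hp (pair_ne_one_of_left hf') hePair, r_one_right r _ hf', hg,
      Prod.mk_zero_zero, Vr_zero_right t _ (by simpa [Prod.mk_zero_zero] using hf)]
  -- main case
  have hf' : Multiplicative.ofAdd ((a, b) : ℕ × ℕ) ≠ 1 := fun h => hf (by simpa using h)
  have hg' : Multiplicative.ofAdd ((c, d) : ℕ × ℕ) ≠ 1 := fun h => hg (by simpa using h)
  have e2 : ∀ (x y : ℕ),
      r.toFun ⟨(Multiplicative.ofAdd ((x, y) : ℕ × ℕ),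
        Multiplicative.ofAdd ((0, 1) : ℕ × ℕ)), pair_ne_one_of_right q2_ne_one⟩
        = (x : ℝ≥0∞) * t + y := by
    intro x y
    rw [r_ab r x y _ q2_ne_one, r_self r _ q2_ne_one, mul_one]
  have e1 : ∀ (x y : ℕ),
      r.toFun ⟨(Multiplicative.ofAdd ((x, y) : ℕ × ℕ),
        Multiplicative.ofAdd ((1, 0) : ℕ × ℕ)), pair_ne_one_of_right q1_ne_one⟩
        = (x : ℝ≥0∞) + y * t⁻¹ := by
    intro x y
    rw [r_ab r x y _ q1_ne_one, r_self r _ q1_ne_one, mul_one,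
      r.inv_symm _ _ (pair_ne_one_of_right q1_ne_one) (pair_ne_one_of_right q2_ne_one)]
  have einv2 : r.toFun ⟨(Multiplicative.ofAdd ((0, 1) : ℕ × ℕ),
      Multiplicative.ofAdd ((c, d) : ℕ × ℕ)), pair_ne_one_of_right hg'⟩
      = ((c : ℝ≥0∞) * t + d)⁻¹ := by
    rw [r.inv_symm _ _ (pair_ne_one_of_right hg') (pair_ne_one_of_right q2_ne_one), e2]
  have einv1 : r.toFun ⟨(Multiplicative.ofAdd ((1, 0) : ℕ × ℕ),
      Multiplicative.ofAdd ((c, d) : ℕ × ℕ)), pair_ne_one_of_right hg'⟩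
      = ((c : ℝ≥0∞) + d * t⁻¹)⁻¹ := by
    rw [r.inv_symm _ _ (pair_ne_one_of_right hg') (pair_ne_one_of_right q1_ne_one), e1]
  by_cases ht : t = ⊤
  · by_cases hac : a = 0 ∧ c = 0
    · -- route via q2
      have hb : b ≠ 0 := fun h => hf (by rw [hac.1, h])
      have hd : d ≠ 0 := fun h => hg (by rw [hac.2, h])
      have l1f : lam1 t (a, b) = 0 := by simp [lam1, ht, hac.1]
      have l1g : lam1 t (c, d) = 0 := by simp [lam1, ht, hac.2]
      have hm := r.mul_trans (Multiplicative.ofAdd ((a, b) : ℕ × ℕ))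
        (Multiplicative.ofAdd ((0, 1) : ℕ × ℕ)) (Multiplicative.ofAdd ((c, d) : ℕ × ℕ))
        (pair_ne_one_of_right q2_ne_one) (pair_ne_one_of_right hg') hp ?_
      · rw [← hm, e2, einv2, Vr_of_zero t l1f l1g]
        simp [lam2, ht, hac.1, hac.2, div_eq_mul_inv]
      · refine pair_ne ?_
        rw [e2, einv2, hac.1, hac.2, Nat.cast_zero, zero_mul, zero_add, zero_add]
        rintro (⟨h1, -⟩ | ⟨h1, -⟩)
        · exact hb (by exact_mod_cast h1)
        · exact (natCast_ne_top b) h1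
    · -- route via q1
      have l1f : lam1 t (a, b) = (a : ℝ≥0∞) := by simp [lam1, ht]
      have l1g : lam1 t (c, d) = (c : ℝ≥0∞) := by simp [lam1, ht]
      have hne : lam1 t (a, b) ≠ 0 ∨ lam1 t (c, d) ≠ 0 := by
        rw [l1f, l1g]
        rcases not_and_or.1 hac with h | h
        · exact Or.inl (by exact_mod_cast h)
        · exact Or.inr (by exact_mod_cast h)
      have hm := r.mul_trans (Multiplicative.ofAdd ((a, b) : ℕ × ℕ))
        (Multiplicative.ofAdd ((1, 0) : ℕ × ℕ)) (Multiplicative.ofAdd ((c, d) : ℕ × ℕ))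
        (pair_ne_one_of_right q1_ne_one) (pair_ne_one_of_right hg') hp ?_
      · rw [← hm, e1, einv1, Vr_of_ne t hne, l1f, l1g]
        simp [ht, div_eq_mul_inv]
      · refine pair_ne ?_
        rw [e1, einv1, ht, ENNReal.inv_top, mul_zero, mul_zero, add_zero, add_zero]
        rintro (⟨h1, h2⟩ | ⟨h1, -⟩)
        · rw [ENNReal.inv_eq_top] at h2
          exact hac ⟨by exact_mod_cast h1, by exact_mod_cast h2⟩
        · exact (natCast_ne_top a) h1
  · by_cases h0 : ((a : ℝ≥0∞) * t + b = 0 ∧ (c : ℝ≥0∞) * t + d = 0)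
    · -- degenerate: t = 0, b = d = 0, a,c > 0 ; route via q1
      have hb : b = 0 := by
        have := (add_eq_zero.1 h0.1).2
        exact_mod_cast this
      have hd : d = 0 := by
        have := (add_eq_zero.1 h0.2).2
        exact_mod_cast this
      have ha : a ≠ 0 := fun h => hf (by rw [h, hb])
      have hc : c ≠ 0 := fun h => hg (by rw [h, hd])
      have l1f : lam1 t (a, b) = 0 := by rw [lam1, if_neg ht]; exact h0.1
      have l1g : lam1 t (c, d) = 0 := by rw [lam1, if_neg ht]; exact h0.2
      have hm := r.mul_trans (Multiplicative.ofAdd ((a, b) : ℕ × ℕ))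
        (Multiplicative.ofAdd ((1, 0) : ℕ × ℕ)) (Multiplicative.ofAdd ((c, d) : ℕ × ℕ))
        (pair_ne_one_of_right q1_ne_one) (pair_ne_one_of_right hg') hp ?_
      · rw [← hm, e1, einv1, Vr_of_zero t l1f l1g]
        simp [lam2, ht, hb, hd, div_eq_mul_inv]
      · refine pair_ne ?_
        rw [e1, einv1, hb, hd, Nat.cast_zero, zero_mul, add_zero, add_zero]
        rintro (⟨h1, -⟩ | ⟨h1, -⟩)
        · exact ha (by exact_mod_cast h1)
        · exact (natCast_ne_top a) h1
    · -- generic: route via q2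
      have l1f : lam1 t (a, b) = (a : ℝ≥0∞) * t + b := by rw [lam1, if_neg ht]
      have l1g : lam1 t (c, d) = (c : ℝ≥0∞) * t + d := by rw [lam1, if_neg ht]
      have hne : lam1 t (a, b) ≠ 0 ∨ lam1 t (c, d) ≠ 0 := by
        rw [l1f, l1g]
        exact not_and_or.1 h0
      have hm := r.mul_trans (Multiplicative.ofAdd ((a, b) : ℕ × ℕ))
        (Multiplicative.ofAdd ((0, 1) : ℕ × ℕ)) (Multiplicative.ofAdd ((c, d) : ℕ × ℕ))
        (pair_ne_one_of_right q2_ne_one) (pair_ne_one_of_right hg') hp ?_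
      · rw [← hm, e2, einv2, Vr_of_ne t hne, l1f, l1g, div_eq_mul_inv]
      · refine pair_ne ?_
        rw [e2, einv2]
        have hnt : (a : ℝ≥0∞) * t + b ≠ ⊤ :=
          ENNReal.add_ne_top.2 ⟨ENNReal.mul_ne_top (natCast_ne_top a) ht, natCast_ne_top b⟩
        rintro (⟨h1, h2⟩ | ⟨h1, -⟩)
        · rw [ENNReal.inv_eq_top] at h2
          exact h0 ⟨h1, h2⟩
        · exact hnt h1

lemma ratio_ext (r1 r2 : RatioSpace SN) (h : r1.toFun = r2.toFun) : r1 = r2 := by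
  cases r1; cases r2; cases h; rfl

end KNUProof

/-- For `S = ℕ²` (written multiplicatively, with standard generators `q₁, q₂`),
the map `R(ℕ²) → [0,∞]`, `r ↦ r(q₁, q₂)`, is a bijection. -/
theorem ratioSpace_N2_bijective :
    Function.Bijective (fun r : RatioSpace (Multiplicative (ℕ × ℕ)) =>
      r.toFun ⟨(Multiplicative.ofAdd ((1, 0) : ℕ × ℕ),
                Multiplicative.ofAdd ((0, 1) : ℕ × ℕ)), by decide⟩) := by
  open KNUProof in
  constructor
  · intro r1 r2 h
    simp only [] at h
    refine ratio_ext r1 r2 ?_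
    funext p
    obtain ⟨⟨f, g⟩, hp⟩ := p
    have e1 := master r1 f.toAdd.1 f.toAdd.2 g.toAdd.1 g.toAdd.2 hp (by decide)
    have e2 := master r2 f.toAdd.1 f.toAdd.2 g.toAdd.1 g.toAdd.2 hp (by decide)
    exact e1.trans ((congrArg (fun z => Vr z (f.toAdd.1, f.toAdd.2) (g.toAdd.1, g.toAdd.2))
      h).trans e2.symm)
  · intro t
    exact ⟨mkRatio t, mkRatio_val t (by decide)⟩
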